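/- For every natural number k, the central binomial coefficient satisfies C(2k, k) ≤ 4^k / √(3k + 1) (as real numbers). -/

import Mathlib

lemma centralBinom_mul_sqrt_le (k : ℕ) :
    (Nat.centralBinom k : ℝ) * Real.sqrt (3 * (k : ℝ) + 1) ≤ 4 ^ k := by
  induction k with
  | zero => simp [Nat.centralBinom]
  | succ n ih =>
    have hn : (0:ℝ) ≤ (n:ℝ) := Nat.cast_nonneg n
    have hc : ((n:ℝ) + 1) * (Nat.centralBinom (n+1) : ℝ)
        = 2 * (2 * (n:ℝ) + 1) * (Nat.centralBinom n : ℝ) := by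
      have h2 := congrArg (Nat.cast : ℕ → ℝ) (Nat.succ_mul_centralBinom_succ n)
      push_cast at h2
      linarith [h2]
    have hs : 2 * (2 * (n:ℝ) + 1) * Real.sqrt (3 * ((n:ℝ)+1) + 1)
        ≤ 4 * ((n:ℝ) + 1) * Real.sqrt (3 * (n:ℝ) + 1) := by
      have h1 : (0:ℝ) ≤ 2 * (2 * (n:ℝ) + 1) := by nlinarith
      have h2 : (0:ℝ) ≤ 4 * ((n:ℝ) + 1) := by nlinarith
      have e1 : 2 * (2 * (n:ℝ) + 1) * Real.sqrt (3 * ((n:ℝ)+1) + 1)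
          = Real.sqrt ((2 * (2 * (n:ℝ) + 1))^2 * (3 * ((n:ℝ)+1) + 1)) := by
        rw [Real.sqrt_mul (by positivity), Real.sqrt_sq h1]
      have e2 : 4 * ((n:ℝ) + 1) * Real.sqrt (3 * (n:ℝ) + 1)
          = Real.sqrt ((4 * ((n:ℝ) + 1))^2 * (3 * (n:ℝ) + 1)) := by
        rw [Real.sqrt_mul (by positivity), Real.sqrt_sq h2]
      rw [e1, e2]
      apply Real.sqrt_le_sqrt
      nlinarith
    have hcb : (0:ℝ) ≤ (Nat.centralBinom n : ℝ) := Nat.cast_nonneg _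
    have hmain : ((n:ℝ) + 1) * ((Nat.centralBinom (n+1) : ℝ) * Real.sqrt (3 * ((n:ℝ)+1) + 1))
        ≤ ((n:ℝ) + 1) * 4 ^ (n+1) := by
      calc ((n:ℝ) + 1) * ((Nat.centralBinom (n+1) : ℝ) * Real.sqrt (3 * ((n:ℝ)+1) + 1))
          = (Nat.centralBinom n : ℝ) * (2 * (2 * (n:ℝ) + 1) * Real.sqrt (3 * ((n:ℝ)+1) + 1)) := by
            rw [← mul_assoc, hc]; ring
        _ ≤ (Nat.centralBinom n : ℝ) * (4 * ((n:ℝ) + 1) * Real.sqrt (3 * (n:ℝ) + 1)) :=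
            mul_le_mul_of_nonneg_left hs hcb
        _ = 4 * ((n:ℝ) + 1) * ((Nat.centralBinom n : ℝ) * Real.sqrt (3 * (n:ℝ) + 1)) := by ring
        _ ≤ 4 * ((n:ℝ) + 1) * 4 ^ n := by
            apply mul_le_mul_of_nonneg_left ih; nlinarith
        _ = ((n:ℝ) + 1) * 4 ^ (n+1) := by ring
    have hpos : (0:ℝ) < (n:ℝ) + 1 := by positivity
    have := (mul_le_mul_iff_right₀ hpos).1 hmain
    push_cast
    convert this using 2 <;> push_cast <;> ring

/-- The central binomial coefficient satisfies `C(2k, k) ≤ 4^k / √(3k + 1)`. -/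
theorem centralBinom_le_four_pow_div_sqrt (k : ℕ) :
    (Nat.centralBinom k : ℝ) ≤ 4 ^ k / Real.sqrt (3 * (k : ℝ) + 1) := by
  have hs : (0:ℝ) < Real.sqrt (3 * (k : ℝ) + 1) := Real.sqrt_pos.2 (by positivity)
  rw [le_div_iff₀ hs]
  exact centralBinom_mul_sqrt_le k
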